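/- Let m > 0 and δ > 0, and define φ(M) := −16π² / ( (log(δ·M/(4m²)))² + π² ). Then: (i) for every real t ≠ 0 and every P ≥ 0 the improper integral C(t, P) := lim_{R → ∞} ( −∫_{4m²}^R φ(M)·sin(t·√(P + M))/√(P + M) dM ) exists, and there is a constant K > 0, independent of t and P, such that |C(t, P)| ≤ K/|t| for all t ≠ 0 and all P ≥ 0; (ii) there is a function h : ℝ → ℝ that is Lebesgue integrable on (0, 1] such that |C(t, P)| ≤ h(t) for all t ∈ (0, 1] and all P ≥ 0. -/

import Mathlib

open MeasureTheory Set Real Filter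
open Topology

noncomputable section StmtAux

namespace StmtAux

variable (m δ t P : ℝ)

def lgF (M : ℝ) : ℝ := Real.log (δ * M / (4 * m ^ 2))
def denF (M : ℝ) : ℝ := (lgF m δ M) ^ 2 + Real.pi ^ 2
def phF (M : ℝ) : ℝ := -(16 * Real.pi ^ 2) / denF m δ M
def phdF (M : ℝ) : ℝ := 32 * Real.pi ^ 2 * lgF m δ M / (M * (denF m δ M) ^ 2)
def coF (M : ℝ) : ℝ := Real.cos (t * Real.sqrt (P + M))
def fF (M : ℝ) : ℝ := phF m δ M * Real.sin (t * Real.sqrt (P + M)) / Real.sqrt (P + M)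
def GF (M : ℝ) : ℝ := (-2 / t) * (phF m δ M * coF t P M)
def psiF (M : ℝ) : ℝ := Real.arctan (lgF m δ M / Real.pi)
def psdF (M : ℝ) : ℝ := Real.pi / (M * denF m δ M)
def CF : ℝ := GF m δ t P (4 * m ^ 2)
    - (2 / t) * ∫ M in Set.Ioi (4 * m ^ 2), phdF m δ M * coF t P M

variable {m δ t P : ℝ}

lemma den_pos (M : ℝ) : 0 < denF m δ M := by
  have := Real.pi_pos
  have := sq_nonneg (lgF m δ M)
  unfold denF; positivity

lemma abs_ph_le (M : ℝ) : |phF m δ M| ≤ 16 := by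
  have h1 := den_pos (m := m) (δ := δ) M
  have h2 : Real.pi ^ 2 ≤ denF m δ M := by
    have := sq_nonneg (lgF m δ M); unfold denF at *; linarith
  have hpi := Real.pi_pos
  rw [phF, abs_div, abs_neg, abs_of_nonneg (by positivity : (0:ℝ) ≤ 16 * Real.pi ^ 2),
    abs_of_pos h1, div_le_iff₀ h1]
  nlinarith

lemma abs_ph_le' {M : ℝ} (h : 0 < lgF m δ M) :
    |phF m δ M| ≤ 16 * Real.pi ^ 2 / (lgF m δ M) ^ 2 := by
  have h1 := den_pos (m := m) (δ := δ) M
  have hpi := Real.pi_pos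
  have h2 : (lgF m δ M) ^ 2 ≤ denF m δ M := by unfold denF; nlinarith
  rw [phF, abs_div, abs_neg, abs_of_nonneg (by positivity : (0:ℝ) ≤ 16 * Real.pi ^ 2),
    abs_of_pos h1]
  apply div_le_div_of_nonneg_left (by positivity) (by positivity) h2

lemma hasDerivAt_lg (hm : 0 < m) (hδ : 0 < δ) {M : ℝ} (hM : 0 < M) :
    HasDerivAt (lgF m δ) M⁻¹ M := by
  have harg : δ * M / (4 * m ^ 2) ≠ 0 := by positivity
  have h : HasDerivAt (fun M : ℝ => δ * M / (4 * m ^ 2)) (δ * 1 / (4 * m ^ 2)) M :=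
    ((hasDerivAt_id M).const_mul δ).div_const _
  have := h.log harg
  convert this using 1
  · rfl
  · field_simp

lemma hasDerivAt_ph (hm : 0 < m) (hδ : 0 < δ) {M : ℝ} (hM : 0 < M) :
    HasDerivAt (phF m δ) (phdF m δ M) M := by
  have hden := den_pos (m := m) (δ := δ) M
  have hd : HasDerivAt (denF m δ) (2 * lgF m δ M ^ 1 * M⁻¹) M := by
    exact ((hasDerivAt_lg hm hδ hM).pow 2).add_const _
  have h : HasDerivAt (phF m δ)
      ((0 * denF m δ M - (-(16 * Real.pi ^ 2)) * (2 * lgF m δ M ^ 1 * M⁻¹)) /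
        (denF m δ M) ^ 2) M :=
    (hasDerivAt_const M (-(16 * Real.pi ^ 2))).div hd hden.ne'
  convert h using 1
  rw [phdF]
  field_simp
  ring

lemma hasDerivAt_psi (hm : 0 < m) (hδ : 0 < δ) {M : ℝ} (hM : 0 < M) :
    HasDerivAt (psiF m δ) (psdF m δ M) M := by
  have hpi := Real.pi_pos
  have h : HasDerivAt (psiF m δ)
      (1 / (1 + (lgF m δ M / Real.pi) ^ 2) * (M⁻¹ / Real.pi)) M :=
    ((hasDerivAt_lg hm hδ hM).div_const Real.pi).arctan
  convert h using 1
  have hden := den_pos (m := m) (δ := δ) M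
  rw [psdF, denF] at *
  field_simp
  ring

lemma sqrt_pos' (hP : 0 ≤ P) {M : ℝ} (hM : 0 < M) : 0 < Real.sqrt (P + M) :=
  Real.sqrt_pos.2 (by linarith)

lemma hasDerivAt_co (hP : 0 ≤ P) {M : ℝ} (hM : 0 < M) :
    HasDerivAt (coF t P)
      (-(Real.sin (t * Real.sqrt (P + M)) * (t / (2 * Real.sqrt (P + M))))) M := by
  have hPM : (0:ℝ) < P + M := by linarith
  have hs : HasDerivAt (fun M : ℝ => Real.sqrt (P + M)) (1 / (2 * Real.sqrt (P + M)) * 1) M := by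
    have h1 : HasDerivAt (fun M : ℝ => P + M) 1 M := (hasDerivAt_id M).const_add P
    exact (Real.hasDerivAt_sqrt hPM.ne').comp M h1
  have := ((hs.const_mul t).cos : HasDerivAt (fun M => Real.cos (t * Real.sqrt (P + M)))
      (-Real.sin (t * Real.sqrt (P + M)) * (t * (1 / (2 * Real.sqrt (P + M)) * 1))) M)
  convert this using 1
  · rfl
  ring

lemma hasDerivAt_G (ht : t ≠ 0) (hP : 0 ≤ P) {M : ℝ} (hM : 0 < M) (hm : 0 < m) (hδ : 0 < δ) :
    HasDerivAt (GF m δ t P)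
      (fF m δ t P M + (-2 / t) * (phdF m δ M * coF t P M)) M := by
  have hs := sqrt_pos' hP hM (P := P)
  have h := (((hasDerivAt_ph hm hδ hM).mul (hasDerivAt_co hP hM (t := t))).const_mul (-2 / t))
  convert h using 1
  · rfl
  · rfl
  · rfl
  rw [fF, coF]
  field_simp
  ring


lemma contAt_lg (hm : 0 < m) (hδ : 0 < δ) {M : ℝ} (hM : 0 < M) :
    ContinuousAt (lgF m δ) M := (hasDerivAt_lg hm hδ hM).continuousAt

lemma contAt_phd (hm : 0 < m) (hδ : 0 < δ) {M : ℝ} (hM : 0 < M) :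
    ContinuousAt (phdF m δ) M := by
  have hden := den_pos (m := m) (δ := δ) M
  have hlg := contAt_lg hm hδ hM
  have hdenc : ContinuousAt (denF m δ) M := by
    exact (hlg.pow 2).add continuousAt_const
  apply ContinuousAt.div
  · exact continuousAt_const.mul hlg
  · exact continuousAt_id.mul (hdenc.pow 2)
  · positivity

lemma cont_co : Continuous (coF t P) := by
  unfold coF
  exact (Real.continuous_cos.comp
    (continuous_const.mul (Real.continuous_sqrt.comp (continuous_const.add continuous_id))))

lemma contAt_f (hm : 0 < m) (hδ : 0 < δ) (hP : 0 ≤ P) {M : ℝ} (hM : 0 < M) :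
    ContinuousAt (fF m δ t P) M := by
  have hs := sqrt_pos' hP hM (P := P)
  have hph : ContinuousAt (phF m δ) M := (hasDerivAt_ph hm hδ hM).continuousAt
  have h1 : ContinuousAt (fun M : ℝ => Real.sin (t * Real.sqrt (P + M))) M :=
    (Real.continuous_sin.comp
      (continuous_const.mul (Real.continuous_sqrt.comp (continuous_const.add continuous_id)))).continuousAt
  have h2 : ContinuousAt (fun M : ℝ => Real.sqrt (P + M)) M :=
    (Real.continuous_sqrt.comp (continuous_const.add continuous_id)).continuousAt
  exact (hph.mul h1).div h2 hs.ne'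

lemma tendsto_lg (hm : 0 < m) (hδ : 0 < δ) : Tendsto (lgF m δ) atTop atTop := by
  apply Real.tendsto_log_atTop.comp
  apply Tendsto.atTop_div_const (by positivity : (0:ℝ) < 4 * m ^ 2)
  exact Tendsto.const_mul_atTop hδ tendsto_id

lemma tendsto_den (hm : 0 < m) (hδ : 0 < δ) : Tendsto (denF m δ) atTop atTop := by
  apply tendsto_atTop_add_const_right
  have h := (tendsto_lg hm hδ).atTop_mul_atTop₀ (tendsto_lg hm hδ)
  refine h.congr (fun M => by rw [sq])

lemma tendsto_ph (hm : 0 < m) (hδ : 0 < δ) : Tendsto (phF m δ) atTop (𝓝 0) :=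
  Tendsto.div_atTop tendsto_const_nhds (tendsto_den hm hδ)

lemma tendsto_psi (hm : 0 < m) (hδ : 0 < δ) :
    Tendsto (psiF m δ) atTop (𝓝 (Real.pi / 2)) := by
  have h : Tendsto (fun M => lgF m δ M / Real.pi) atTop atTop :=
    (tendsto_lg hm hδ).atTop_div_const Real.pi_pos
  exact (Real.tendsto_arctan_atTop.mono_right nhdsWithin_le_nhds).comp h

lemma psd_nonneg {M : ℝ} (hM : 0 < M) : 0 ≤ psdF m δ M := by
  have := den_pos (m := m) (δ := δ) M
  have := Real.pi_pos
  unfold psdF; positivity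

lemma abs_phd_le (hm : 0 < m) (hδ : 0 < δ) {M : ℝ} (hM : 0 < M) :
    |phdF m δ M| ≤ 16 * psdF m δ M := by
  have hden := den_pos (m := m) (δ := δ) M
  have hpi := Real.pi_pos
  have key : 2 * Real.pi * |lgF m δ M| ≤ denF m δ M := by
    have h1 := sq_nonneg (|lgF m δ M| - Real.pi)
    have h2 : |lgF m δ M| ^ 2 = lgF m δ M ^ 2 := sq_abs _
    unfold denF; nlinarith
  rw [phdF, psdF, abs_div, abs_of_pos (by positivity : (0:ℝ) < M * denF m δ M ^ 2)]
  rw [div_le_iff₀ (by positivity), abs_mul, abs_of_nonneg (by positivity : (0:ℝ) ≤ 32 * Real.pi ^ 2)]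
  have expand : 16 * (Real.pi / (M * denF m δ M)) * (M * denF m δ M ^ 2)
      = 16 * Real.pi * denF m δ M := by field_simp
  rw [expand]
  nlinarith [abs_nonneg (lgF m δ M)]

lemma psd_integrableOn (hm : 0 < m) (hδ : 0 < δ) {Y : ℝ} (hY : 0 < Y) :
    IntegrableOn (psdF m δ) (Set.Ioi Y) := by
  apply integrableOn_Ioi_deriv_of_nonneg' (l := Real.pi / 2) (g := psiF m δ)
    (fun x hx => hasDerivAt_psi hm hδ (lt_of_lt_of_le hY hx))
    (fun x hx => psd_nonneg (lt_trans hY hx)) (tendsto_psi hm hδ)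

lemma integral_psd (hm : 0 < m) (hδ : 0 < δ) {Y : ℝ} (hY : 0 < Y) :
    ∫ M in Set.Ioi Y, psdF m δ M = Real.pi / 2 - psiF m δ Y :=
  integral_Ioi_of_hasDerivAt_of_nonneg'
    (fun x hx => hasDerivAt_psi hm hδ (lt_of_lt_of_le hY hx))
    (fun x hx => psd_nonneg (lt_trans hY hx)) (tendsto_psi hm hδ)

lemma phdco_integrableOn (hm : 0 < m) (hδ : 0 < δ) {Y : ℝ} (hY : 0 < Y) :
    IntegrableOn (fun M => phdF m δ M * coF t P M) (Set.Ioi Y) := by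
  apply Integrable.mono ((psd_integrableOn hm hδ hY).const_mul 16)
  · apply ContinuousOn.aestronglyMeasurable _ measurableSet_Ioi
    intro x hx
    exact ((contAt_phd hm hδ (lt_trans hY hx)).mul (cont_co (t := t) (P := P)).continuousAt).continuousWithinAt
  · filter_upwards [ae_restrict_mem measurableSet_Ioi] with M hM
    have hM0 : 0 < M := lt_trans hY hM
    have h1 : |coF t P M| ≤ 1 := by rw [coF]; exact Real.abs_cos_le_one _
    have h2 := abs_phd_le hm hδ hM0
    have h3 := psd_nonneg (m := m) (δ := δ) hM0
    rw [Real.norm_eq_abs, Real.norm_eq_abs, abs_mul]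
    calc |phdF m δ M| * |coF t P M| ≤ |phdF m δ M| * 1 := by
          exact mul_le_mul_of_nonneg_left h1 (abs_nonneg _)
      _ = |phdF m δ M| := mul_one _
      _ ≤ 16 * psdF m δ M := h2
      _ ≤ |16 * psdF m δ M| := le_abs_self _

lemma norm_integral_phdco_le (hm : 0 < m) (hδ : 0 < δ) {Y : ℝ} (hY : 0 < Y) :
    |∫ M in Set.Ioi Y, phdF m δ M * coF t P M| ≤ 16 * (Real.pi / 2 - psiF m δ Y) := by
  have h1 : |∫ M in Set.Ioi Y, phdF m δ M * coF t P M|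
      ≤ ∫ M in Set.Ioi Y, |phdF m δ M * coF t P M| := by
    simpa only [Real.norm_eq_abs] using
      norm_integral_le_integral_norm (μ := volume.restrict (Set.Ioi Y))
        (f := fun M => phdF m δ M * coF t P M)
  refine h1.trans ?_
  have h2 : ∫ M in Set.Ioi Y, |phdF m δ M * coF t P M|
      ≤ ∫ M in Set.Ioi Y, 16 * psdF m δ M := by
    apply setIntegral_mono_on ((phdco_integrableOn hm hδ hY (t := t) (P := P)).abs)
      ((psd_integrableOn hm hδ hY).const_mul 16) measurableSet_Ioi
    intro M hM
    have hM0 : 0 < M := lt_trans hY hM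
    have h1 : |coF t P M| ≤ 1 := by rw [coF]; exact Real.abs_cos_le_one _
    rw [abs_mul]
    calc |phdF m δ M| * |coF t P M| ≤ |phdF m δ M| * 1 :=
          mul_le_mul_of_nonneg_left h1 (abs_nonneg _)
      _ = |phdF m δ M| := mul_one _
      _ ≤ 16 * psdF m δ M := abs_phd_le hm hδ hM0
  refine h2.trans ?_
  rw [MeasureTheory.integral_const_mul, integral_psd hm hδ hY]


lemma ibp (hm : 0 < m) (hδ : 0 < δ) (ht : t ≠ 0) (hP : 0 ≤ P) {Y R : ℝ}
    (hY : 0 < Y) (hYR : Y ≤ R) :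
    ∫ M in Y..R, fF m δ t P M
      = GF m δ t P R - GF m δ t P Y + (2 / t) * ∫ M in Y..R, phdF m δ M * coF t P M := by
  have hmem : ∀ x ∈ Set.uIcc Y R, 0 < x := by
    intro x hx
    rw [Set.uIcc_of_le hYR] at hx
    exact lt_of_lt_of_le hY hx.1
  have hderiv : ∀ x ∈ Set.uIcc Y R, HasDerivAt (GF m δ t P)
      (fF m δ t P x + (-2 / t) * (phdF m δ x * coF t P x)) x :=
    fun x hx => hasDerivAt_G ht hP (hmem x hx) hm hδ
  have hcont_f : ContinuousOn (fF m δ t P) (Set.uIcc Y R) :=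
    fun x hx => (contAt_f hm hδ hP (hmem x hx)).continuousWithinAt
  have hcont_g : ContinuousOn (fun M => phdF m δ M * coF t P M) (Set.uIcc Y R) :=
    fun x hx => ((contAt_phd hm hδ (hmem x hx)).mul
      (cont_co (t := t) (P := P)).continuousAt).continuousWithinAt
  have hif : IntervalIntegrable (fF m δ t P) volume Y R := hcont_f.intervalIntegrable
  have hig : IntervalIntegrable (fun M => phdF m δ M * coF t P M) volume Y R :=
    hcont_g.intervalIntegrable
  have hig' : IntervalIntegrable (fun M => (-2 / t) * (phdF m δ M * coF t P M)) volume Y R :=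
    hig.const_mul _
  have heq := intervalIntegral.integral_eq_sub_of_hasDerivAt hderiv (hif.add hig')
  rw [intervalIntegral.integral_add hif hig', intervalIntegral.integral_const_mul] at heq
  have : (2 : ℝ) / t = -(-2 / t) := by ring
  rw [this]
  linarith

lemma tendsto_CF (hm : 0 < m) (hδ : 0 < δ) (ht : t ≠ 0) (hP : 0 ≤ P) :
    Tendsto (fun R : ℝ => -∫ M in Set.Icc (4 * m ^ 2) R, fF m δ t P M)
      atTop (𝓝 (CF m δ t P)) := by
  have ha : (0:ℝ) < 4 * m ^ 2 := by positivity
  have hG0 : Tendsto (fun R => GF m δ t P R) atTop (𝓝 0) := by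
    have hb : Tendsto (fun R => (2 / |t|) * |phF m δ R|) atTop (𝓝 0) := by
      have := ((tendsto_ph hm hδ).abs).const_mul (2 / |t|)
      simpa using this
    refine squeeze_zero_norm (fun R => ?_) hb
    rw [GF, Real.norm_eq_abs, abs_mul, abs_mul]
    have h1 : |(-2 : ℝ) / t| = 2 / |t| := by
      rw [abs_div, abs_neg]; norm_num
    rw [h1]
    have h2 : |coF t P R| ≤ 1 := by rw [coF]; exact Real.abs_cos_le_one _
    have h3 : (0:ℝ) ≤ 2 / |t| := by positivity
    calc 2 / |t| * (|phF m δ R| * |coF t P R|)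
        ≤ 2 / |t| * (|phF m δ R| * 1) :=
          mul_le_mul_of_nonneg_left (mul_le_mul_of_nonneg_left h2 (abs_nonneg _)) h3
      _ = 2 / |t| * |phF m δ R| := by ring
  have hI : Tendsto (fun R => ∫ M in (4 * m ^ 2)..R, phdF m δ M * coF t P M) atTop
      (𝓝 (∫ M in Set.Ioi (4 * m ^ 2), phdF m δ M * coF t P M)) :=
    intervalIntegral_tendsto_integral_Ioi _ (phdco_integrableOn hm hδ ha) tendsto_id
  have hcomb := (tendsto_const_nhds (x := GF m δ t P (4 * m ^ 2)) (f := atTop)).sub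
    (hG0.add (hI.const_mul (2 / t)))
  rw [zero_add] at hcomb
  have hCF : CF m δ t P = GF m δ t P (4 * m ^ 2)
      - (2 / t * ∫ M in Set.Ioi (4 * m ^ 2), phdF m δ M * coF t P M) := by
    rw [CF]
  rw [hCF]
  apply Tendsto.congr' _ hcomb
  filter_upwards [Ici_mem_atTop (4 * m ^ 2)] with R hR
  have hR' : 4 * m ^ 2 ≤ R := hR
  rw [MeasureTheory.integral_Icc_eq_integral_Ioc, ← intervalIntegral.integral_of_le hR',
    ibp hm hδ ht hP ha hR']
  ring


lemma abs_CF_le (hm : 0 < m) (hδ : 0 < δ) (ht : t ≠ 0) (hP : 0 ≤ P) :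
    |CF m δ t P| ≤ (32 + 32 * Real.pi) / |t| := by
  have ha : (0:ℝ) < 4 * m ^ 2 := by positivity
  have ht' : (0:ℝ) < |t| := abs_pos.2 ht
  have hpi := Real.pi_pos
  have hGa : |GF m δ t P (4 * m ^ 2)| ≤ 2 / |t| * 16 := by
    rw [GF, abs_mul, abs_mul]
    have h1 : |(-2 : ℝ) / t| = 2 / |t| := by rw [abs_div, abs_neg]; norm_num
    rw [h1]
    have h2 : |coF t P (4 * m ^ 2)| ≤ 1 := by rw [coF]; exact Real.abs_cos_le_one _
    have h3 := abs_ph_le (m := m) (δ := δ) (4 * m ^ 2)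
    have h4 : (0:ℝ) ≤ 2 / |t| := by positivity
    have h7 : |phF m δ (4 * m ^ 2)| * |coF t P (4 * m ^ 2)| ≤ 16 := by
      nlinarith [abs_nonneg (phF m δ (4 * m ^ 2)), abs_nonneg (coF t P (4 * m ^ 2))]
    exact mul_le_mul_of_nonneg_left h7 h4
  have hIa : |∫ M in Set.Ioi (4 * m ^ 2), phdF m δ M * coF t P M| ≤ 16 * Real.pi := by
    refine (norm_integral_phdco_le hm hδ ha).trans ?_
    have h5 : -(Real.pi / 2) < psiF m δ (4 * m ^ 2) := Real.neg_pi_div_two_lt_arctan _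
    nlinarith
  have h6 : |CF m δ t P| ≤ |GF m δ t P (4 * m ^ 2)|
      + 2 / |t| * |∫ M in Set.Ioi (4 * m ^ 2), phdF m δ M * coF t P M| := by
    rw [CF]
    refine (abs_sub _ _).trans ?_
    have : |2 / t * ∫ M in Set.Ioi (4 * m ^ 2), phdF m δ M * coF t P M|
        = 2 / |t| * |∫ M in Set.Ioi (4 * m ^ 2), phdF m δ M * coF t P M| := by
      rw [abs_mul, abs_div]; norm_num
    rw [this]
  refine h6.trans ?_
  have heq : (32 + 32 * Real.pi) / |t| = 2 / |t| * 16 + 2 / |t| * (16 * Real.pi) := by ring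
  rw [heq]
  have h4 : (0:ℝ) ≤ 2 / |t| := by positivity
  nlinarith

lemma f_intervalIntegrable (hm : 0 < m) (hδ : 0 < δ) (hP : 0 ≤ P) {Y R : ℝ}
    (hY : 0 < Y) (hYR : Y ≤ R) : IntervalIntegrable (fF m δ t P) volume Y R := by
  have hmem : ∀ x ∈ Set.uIcc Y R, 0 < x := by
    intro x hx
    rw [Set.uIcc_of_le hYR] at hx
    exact lt_of_lt_of_le hY hx.1
  have hcont : ContinuousOn (fF m δ t P) (Set.uIcc Y R) :=
    fun x hx => (contAt_f hm hδ hP (hmem x hx)).continuousWithinAt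
  exact hcont.intervalIntegrable

lemma abs_f_le (hP : 0 ≤ P) (ht0 : 0 < t) {M : ℝ} (hM : 0 < M) :
    |fF m δ t P M| ≤ |phF m δ M| * t := by
  have hs := sqrt_pos' hP hM (P := P)
  rw [fF, abs_div, abs_mul, abs_of_pos hs, div_le_iff₀ hs]
  have h1 : |Real.sin (t * Real.sqrt (P + M))| ≤ t * Real.sqrt (P + M) := by
    have h := Real.abs_sin_le_abs (x := t * Real.sqrt (P + M))
    rwa [abs_of_nonneg (mul_nonneg ht0.le (Real.sqrt_nonneg _))] at h
  calc |phF m δ M| * |Real.sin (t * Real.sqrt (P + M))|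
      ≤ |phF m δ M| * (t * Real.sqrt (P + M)) :=
        mul_le_mul_of_nonneg_left h1 (abs_nonneg _)
    _ = |phF m δ M| * t * Real.sqrt (P + M) := by ring

set_option maxHeartbeats 2000000 in
lemma refined_bound (hm : 0 < m) (hδ : 0 < δ) (ht0 : 0 < t) (ht1 : t ≤ 1)
    (ht2 : t ≤ 1 / (4 * m ^ 2)) (ht3 : t ≤ δ / (4 * m ^ 2) * Real.exp (-2))
    (hP : 0 ≤ P) :
    |CF m δ t P| ≤ 16 + 80 * Real.pi ^ 2
      / (t * (Real.log (δ / (4 * m ^ 2)) - Real.log t) ^ 2) := by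
  have ha : (0:ℝ) < 4 * m ^ 2 := by positivity
  have ht : t ≠ 0 := ne_of_gt ht0
  have hpi := Real.pi_pos
  set w : ℝ := Real.log (δ / (4 * m ^ 2)) - Real.log t with hw_def
  have hδ' : (0:ℝ) < δ / (4 * m ^ 2) := by positivity
  -- w ≥ 2
  have hw2 : 2 ≤ w := by
    have h1 : Real.log t ≤ Real.log (δ / (4 * m ^ 2) * Real.exp (-2)) :=
      Real.log_le_log ht0 ht3
    rw [Real.log_mul (ne_of_gt hδ') (Real.exp_ne_zero _), Real.log_exp] at h1
    rw [hw_def]; linarith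
  have hw0 : (0:ℝ) < w := by linarith
  -- basic order facts
  have hY0 : (0:ℝ) < 1 / t := by positivity
  have hX0 : (0:ℝ) < 1 / t ^ 2 := by positivity
  have haY : 4 * m ^ 2 ≤ 1 / t := by
    rw [le_div_iff₀ ht0]
    have h1 := mul_le_mul_of_nonneg_left ht2 (le_of_lt ha)
    rw [mul_one_div, div_self (ne_of_gt ha)] at h1
    linarith
  have hYX : 1 / t ≤ 1 / t ^ 2 := by
    rw [div_le_div_iff₀ ht0 (by positivity)]
    nlinarith
  have haX : 4 * m ^ 2 ≤ 1 / t ^ 2 := le_trans haY hYX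
  -- log values
  have hlgY : lgF m δ (1 / t) = w := by
    rw [lgF, hw_def]
    rw [show δ * (1 / t) / (4 * m ^ 2) = (δ / (4 * m ^ 2)) / t by ring]
    rw [Real.log_div (ne_of_gt hδ') ht]
  have hlg_mono : ∀ M : ℝ, 1 / t ≤ M → w ≤ lgF m δ M := by
    intro M hM
    rw [← hlgY, lgF, lgF]
    apply Real.log_le_log (by positivity)
    gcongr
  have hlgY2 : (2:ℝ) ≤ lgF m δ (1 / t) := by rw [hlgY]; exact hw2
  have hlgX : w ≤ lgF m δ (1 / t ^ 2) := hlg_mono _ hYX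
  have hlgX0 : (0:ℝ) < lgF m δ (1 / t ^ 2) := by linarith
  -- |phF X| ≤ 16π²/w²
  have hphX : |phF m δ (1 / t ^ 2)| ≤ 16 * Real.pi ^ 2 / w ^ 2 := by
    refine (abs_ph_le' hlgX0).trans ?_
    apply div_le_div_of_nonneg_left (by positivity) (by positivity)
    nlinarith
  -- tail integral of phd on Ioi X
  have hphd_nonneg : ∀ x ∈ Set.Ioi (1 / t ^ 2), 0 ≤ phdF m δ x := by
    intro x hx
    have hx0 : 0 < x := lt_trans hX0 hx
    have hlgx : 0 < lgF m δ x := lt_of_lt_of_le (by linarith)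
      (hlg_mono x (le_trans hYX (le_of_lt hx)))
    have := den_pos (m := m) (δ := δ) x
    rw [phdF]
    positivity
  have hderivX : ∀ x ∈ Set.Ici (1 / t ^ 2), HasDerivAt (phF m δ) (phdF m δ x) x :=
    fun x hx => hasDerivAt_ph hm hδ (lt_of_lt_of_le hX0 hx)
  have htail_int : IntegrableOn (phdF m δ) (Set.Ioi (1 / t ^ 2)) :=
    integrableOn_Ioi_deriv_of_nonneg' hderivX hphd_nonneg (tendsto_ph hm hδ)
  have htail_val : ∫ M in Set.Ioi (1 / t ^ 2), phdF m δ M = 0 - phF m δ (1 / t ^ 2) :=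
    integral_Ioi_of_hasDerivAt_of_nonneg' hderivX hphd_nonneg (tendsto_ph hm hδ)
  have htail : |∫ M in Set.Ioi (1 / t ^ 2), phdF m δ M * coF t P M|
      ≤ 16 * Real.pi ^ 2 / w ^ 2 := by
    have h1 : |∫ M in Set.Ioi (1 / t ^ 2), phdF m δ M * coF t P M|
        ≤ ∫ M in Set.Ioi (1 / t ^ 2), |phdF m δ M * coF t P M| := by
      simpa only [Real.norm_eq_abs] using
        norm_integral_le_integral_norm (μ := volume.restrict (Set.Ioi (1 / t ^ 2)))
          (f := fun M => phdF m δ M * coF t P M)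
    refine h1.trans ?_
    have h2 : ∫ M in Set.Ioi (1 / t ^ 2), |phdF m δ M * coF t P M|
        ≤ ∫ M in Set.Ioi (1 / t ^ 2), phdF m δ M := by
      apply setIntegral_mono_on ((phdco_integrableOn hm hδ hX0 (t := t) (P := P)).abs)
        htail_int measurableSet_Ioi
      intro M hM
      have h3 : |coF t P M| ≤ 1 := by rw [coF]; exact Real.abs_cos_le_one _
      have h4 := hphd_nonneg M hM
      rw [abs_mul, abs_of_nonneg h4]
      nlinarith [abs_nonneg (coF t P M)]
    refine h2.trans ?_
    rw [htail_val]
    have := neg_abs_le (phF m δ (1 / t ^ 2))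
    linarith
  -- head integrals
  have hii1 : IntervalIntegrable (fF m δ t P) volume (4 * m ^ 2) (1 / t) :=
    f_intervalIntegrable hm hδ hP ha haY
  have hii2 : IntervalIntegrable (fF m δ t P) volume (1 / t) (1 / t ^ 2) :=
    f_intervalIntegrable hm hδ hP hY0 hYX
  have hhead1 : |∫ M in (4 * m ^ 2)..(1 / t), fF m δ t P M| ≤ 16 := by
    have hb : ∀ x ∈ Set.uIoc (4 * m ^ 2) (1 / t), ‖fF m δ t P x‖ ≤ 16 * t := by
      intro x hx
      rw [Set.uIoc_of_le haY] at hx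
      have hx0 : 0 < x := lt_trans ha hx.1
      rw [Real.norm_eq_abs]
      refine (abs_f_le hP ht0 hx0).trans ?_
      have := abs_ph_le (m := m) (δ := δ) x
      nlinarith
    have := intervalIntegral.norm_integral_le_of_norm_le_const hb
    rw [Real.norm_eq_abs] at this
    refine this.trans ?_
    rw [abs_of_nonneg (by linarith : (0:ℝ) ≤ 1 / t - 4 * m ^ 2)]
    have h1 : 16 * t * (1 / t - 4 * m ^ 2) ≤ 16 * t * (1 / t) := by nlinarith
    have h2 : 16 * t * (1 / t) = 16 := by field_simp
    linarith
  have hhead2 : |∫ M in (1 / t)..(1 / t ^ 2), fF m δ t P M|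
      ≤ 16 * Real.pi ^ 2 / (t * w ^ 2) := by
    have hb : ∀ x ∈ Set.uIoc (1 / t) (1 / t ^ 2), ‖fF m δ t P x‖
        ≤ 16 * Real.pi ^ 2 / w ^ 2 * t := by
      intro x hx
      rw [Set.uIoc_of_le hYX] at hx
      have hx0 : 0 < x := lt_trans hY0 hx.1
      have hlgx : w ≤ lgF m δ x := hlg_mono x (le_of_lt hx.1)
      have hlgx0 : 0 < lgF m δ x := by linarith
      rw [Real.norm_eq_abs]
      refine (abs_f_le hP ht0 hx0).trans ?_
      have h5 : |phF m δ x| ≤ 16 * Real.pi ^ 2 / w ^ 2 := by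
        refine (abs_ph_le' hlgx0).trans ?_
        apply div_le_div_of_nonneg_left (by positivity) (by positivity)
        nlinarith
      nlinarith
    have := intervalIntegral.norm_integral_le_of_norm_le_const hb
    rw [Real.norm_eq_abs] at this
    refine this.trans ?_
    rw [abs_of_nonneg (by linarith : (0:ℝ) ≤ 1 / t ^ 2 - 1 / t)]
    have hC : (0:ℝ) ≤ 16 * Real.pi ^ 2 / w ^ 2 * t := by positivity
    have h1 : 16 * Real.pi ^ 2 / w ^ 2 * t * (1 / t ^ 2 - 1 / t)
        ≤ 16 * Real.pi ^ 2 / w ^ 2 * t * (1 / t ^ 2) := by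
      apply mul_le_mul_of_nonneg_left _ hC
      linarith
    have h2 : 16 * Real.pi ^ 2 / w ^ 2 * t * (1 / t ^ 2)
        = 16 * Real.pi ^ 2 / (t * w ^ 2) := by
      field_simp
    linarith
  -- |GF X| bound
  have hGX : |GF m δ t P (1 / t ^ 2)| ≤ 32 * Real.pi ^ 2 / (t * w ^ 2) := by
    rw [GF, abs_mul, abs_mul]
    have h1 : |(-2 : ℝ) / t| = 2 / t := by
      rw [abs_div, abs_neg, abs_of_pos ht0]; norm_num
    rw [h1]
    have h2 : |coF t P (1 / t ^ 2)| ≤ 1 := by rw [coF]; exact Real.abs_cos_le_one _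
    have h3 : |phF m δ (1 / t ^ 2)| * |coF t P (1 / t ^ 2)|
        ≤ 16 * Real.pi ^ 2 / w ^ 2 := by
      calc |phF m δ (1 / t ^ 2)| * |coF t P (1 / t ^ 2)|
          ≤ |phF m δ (1 / t ^ 2)| * 1 := mul_le_mul_of_nonneg_left h2 (abs_nonneg _)
        _ = |phF m δ (1 / t ^ 2)| := mul_one _
        _ ≤ 16 * Real.pi ^ 2 / w ^ 2 := hphX
    calc 2 / t * (|phF m δ (1 / t ^ 2)| * |coF t P (1 / t ^ 2)|)
        ≤ 2 / t * (16 * Real.pi ^ 2 / w ^ 2) :=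
          mul_le_mul_of_nonneg_left h3 (by positivity)
      _ = 32 * Real.pi ^ 2 / (t * w ^ 2) := by field_simp; ring
  -- decomposition
  have hsplit : ∫ M in Set.Ioi (4 * m ^ 2), phdF m δ M * coF t P M
      = (∫ M in (4 * m ^ 2)..(1 / t ^ 2), phdF m δ M * coF t P M)
        + ∫ M in Set.Ioi (1 / t ^ 2), phdF m δ M * coF t P M := by
    rw [← Set.Ioc_union_Ioi_eq_Ioi haX, setIntegral_union (Set.Ioc_disjoint_Ioi le_rfl)
      measurableSet_Ioi
      ((phdco_integrableOn hm hδ ha (t := t) (P := P)).mono_set Set.Ioc_subset_Ioi_self)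
      (phdco_integrableOn hm hδ hX0 (t := t) (P := P)),
      intervalIntegral.integral_of_le haX]
  have hibp := ibp hm hδ ht hP ha haX
  have hdecomp : CF m δ t P = GF m δ t P (1 / t ^ 2)
      - (∫ M in (4 * m ^ 2)..(1 / t ^ 2), fF m δ t P M)
      - (2 / t) * ∫ M in Set.Ioi (1 / t ^ 2), phdF m δ M * coF t P M := by
    rw [CF, hsplit]
    linear_combination hibp
  -- split head integral
  have hadd : ∫ M in (4 * m ^ 2)..(1 / t ^ 2), fF m δ t P M
      = (∫ M in (4 * m ^ 2)..(1 / t), fF m δ t P M)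
        + ∫ M in (1 / t)..(1 / t ^ 2), fF m δ t P M :=
    (intervalIntegral.integral_add_adjacent_intervals hii1 hii2).symm
  rw [hdecomp, hadd]
  have habs : |GF m δ t P (1 / t ^ 2)
      - ((∫ M in (4 * m ^ 2)..(1 / t), fF m δ t P M)
        + ∫ M in (1 / t)..(1 / t ^ 2), fF m δ t P M)
      - (2 / t) * ∫ M in Set.Ioi (1 / t ^ 2), phdF m δ M * coF t P M|
      ≤ |GF m δ t P (1 / t ^ 2)| + |∫ M in (4 * m ^ 2)..(1 / t), fF m δ t P M|
        + |∫ M in (1 / t)..(1 / t ^ 2), fF m δ t P M|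
        + (2 / t) * |∫ M in Set.Ioi (1 / t ^ 2), phdF m δ M * coF t P M| := by
    have h1 : |(2 / t) * ∫ M in Set.Ioi (1 / t ^ 2), phdF m δ M * coF t P M|
        = (2 / t) * |∫ M in Set.Ioi (1 / t ^ 2), phdF m δ M * coF t P M| := by
      rw [abs_mul, abs_of_pos (by positivity : (0:ℝ) < 2 / t)]
    calc _ ≤ |GF m δ t P (1 / t ^ 2)
          - ((∫ M in (4 * m ^ 2)..(1 / t), fF m δ t P M)
            + ∫ M in (1 / t)..(1 / t ^ 2), fF m δ t P M)|
          + |(2 / t) * ∫ M in Set.Ioi (1 / t ^ 2), phdF m δ M * coF t P M| :=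
        abs_sub _ _
      _ ≤ _ := by
        rw [h1]
        have h2 := abs_sub (GF m δ t P (1 / t ^ 2))
          ((∫ M in (4 * m ^ 2)..(1 / t), fF m δ t P M)
            + ∫ M in (1 / t)..(1 / t ^ 2), fF m δ t P M)
        have h3 := abs_add_le (∫ M in (4 * m ^ 2)..(1 / t), fF m δ t P M)
          (∫ M in (1 / t)..(1 / t ^ 2), fF m δ t P M)
        linarith
  refine habs.trans ?_
  have htail' : (2 / t) * |∫ M in Set.Ioi (1 / t ^ 2), phdF m δ M * coF t P M|
      ≤ 32 * Real.pi ^ 2 / (t * w ^ 2) := by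
    calc (2 / t) * |∫ M in Set.Ioi (1 / t ^ 2), phdF m δ M * coF t P M|
        ≤ (2 / t) * (16 * Real.pi ^ 2 / w ^ 2) :=
          mul_le_mul_of_nonneg_left htail (by positivity)
      _ = 32 * Real.pi ^ 2 / (t * w ^ 2) := by field_simp; ring
  have hsum : 32 * Real.pi ^ 2 / (t * w ^ 2) + 16 + 16 * Real.pi ^ 2 / (t * w ^ 2)
      + 32 * Real.pi ^ 2 / (t * w ^ 2) = 16 + 80 * Real.pi ^ 2 / (t * w ^ 2) := by
    ring
  linarith


def t0F (m δ : ℝ) : ℝ := min (min 1 (1 / (4 * m ^ 2))) (δ / (4 * m ^ 2) * Real.exp (-2))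

lemma t0_pos (hm : 0 < m) (hδ : 0 < δ) : 0 < t0F m δ := by
  have h1 : (0:ℝ) < 1 / (4 * m ^ 2) := by positivity
  have h2 : (0:ℝ) < δ / (4 * m ^ 2) * Real.exp (-2) := by positivity
  exact lt_min (lt_min one_pos h1) h2

lemma t0_le_one : t0F m δ ≤ 1 := le_trans (min_le_left _ _) (min_le_left _ _)

def hfunF (m δ : ℝ) (t : ℝ) : ℝ :=
  if t ≤ t0F m δ then
    16 + 80 * Real.pi ^ 2 / (t * (Real.log (δ / (4 * m ^ 2)) - Real.log t) ^ 2)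
  else (32 + 32 * Real.pi) / t

lemma hfun_bound (hm : 0 < m) (hδ : 0 < δ) {t : ℝ} (htm : t ∈ Set.Ioc (0:ℝ) 1)
    (hP : 0 ≤ P) : |CF m δ t P| ≤ hfunF m δ t := by
  obtain ⟨ht0, ht1⟩ := htm
  by_cases hle : t ≤ t0F m δ
  · rw [hfunF, if_pos hle]
    exact refined_bound hm hδ ht0 ht1
      (le_trans hle (le_trans (min_le_left _ _) (min_le_right _ _)))
      (le_trans hle (min_le_right _ _)) hP
  · rw [hfunF, if_neg hle]
    have h := abs_CF_le hm hδ (ne_of_gt ht0) hP (m := m) (δ := δ)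
    rwa [abs_of_pos ht0] at h

lemma w_ge_two (hm : 0 < m) (hδ : 0 < δ) {x : ℝ} (hx0 : 0 < x) (hx : x ≤ t0F m δ) :
    2 ≤ Real.log (δ / (4 * m ^ 2)) - Real.log x := by
  have hδ' : (0:ℝ) < δ / (4 * m ^ 2) := by positivity
  have h1 : Real.log x ≤ Real.log (δ / (4 * m ^ 2) * Real.exp (-2)) :=
    Real.log_le_log hx0 (le_trans hx (min_le_right _ _))
  rw [Real.log_mul (ne_of_gt hδ') (Real.exp_ne_zero _), Real.log_exp] at h1
  linarith

lemma v_integrable (hm : 0 < m) (hδ : 0 < δ) :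
    IntegrableOn (fun x : ℝ => (x * (Real.log (δ / (4 * m ^ 2)) - Real.log x) ^ 2)⁻¹)
      (Set.Ioc (0:ℝ) (t0F m δ)) := by
  set δ' : ℝ := δ / (4 * m ^ 2) with hδ'_def
  have hδ' : (0:ℝ) < δ' := by rw [hδ'_def]; positivity
  set V : ℝ → ℝ := fun x => if x ≤ 0 then 0 else (Real.log δ' - Real.log x)⁻¹ with hV_def
  have hVderiv : ∀ x ∈ Set.Ioo (0:ℝ) (t0F m δ),
      HasDerivAt V ((x * (Real.log δ' - Real.log x) ^ 2)⁻¹) x := by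
    intro x hx
    have hx0 : 0 < x := hx.1
    have hw := w_ge_two hm hδ hx0 hx.2.le
    have hne : Real.log δ' - Real.log x ≠ 0 := by rw [hδ'_def] at *; intro h; rw [h] at hw; norm_num at hw
    have h1 : HasDerivAt (fun s : ℝ => Real.log δ' - Real.log s) (-x⁻¹) x :=
      (Real.hasDerivAt_log (ne_of_gt hx0)).const_sub _
    have h2 := h1.inv hne
    have h3 : HasDerivAt (fun s : ℝ => (Real.log δ' - Real.log s)⁻¹)
        ((x * (Real.log δ' - Real.log x) ^ 2)⁻¹) x := by
      convert h2 using 1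
      · rfl
      · rfl
      · rfl
      rw [neg_neg, mul_inv, div_eq_mul_inv]
    apply h3.congr_of_eventuallyEq
    filter_upwards [eventually_gt_nhds hx0] with s hs
    rw [hV_def]
    simp only [not_le.2 hs, if_false]
  have hVcont : ContinuousOn V (Set.Icc (0:ℝ) (t0F m δ)) := by
    intro x hx
    rcases eq_or_lt_of_le hx.1 with heq | hlt
    · subst heq
      have hV0 : V 0 = 0 := by rw [hV_def]; simp
      rw [ContinuousWithinAt, hV0]
      have hmain : Tendsto V (𝓝[>] (0:ℝ)) (𝓝 0) := by
        have h2 : Tendsto (fun s : ℝ => Real.log δ' - Real.log s) (𝓝[>] (0:ℝ)) atTop := by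
          have h3 : Tendsto (fun s : ℝ => -Real.log s) (𝓝[>] (0:ℝ)) atTop :=
            tendsto_neg_atBot_atTop.comp Real.tendsto_log_nhdsGT_zero
          have h4 := tendsto_atTop_add_const_left (𝓝[>] (0:ℝ)) (Real.log δ') h3
          exact h4.congr (fun s => by ring)
        have h5 : Tendsto (fun s : ℝ => (Real.log δ' - Real.log s)⁻¹) (𝓝[>] (0:ℝ)) (𝓝 0) :=
          tendsto_inv_atTop_zero.comp h2
        apply h5.congr'
        filter_upwards [self_mem_nhdsWithin] with s hs
        rw [hV_def]
        simp only [not_le.2 (show (0:ℝ) < s from hs), if_false]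
      have hpure : Tendsto V (pure (0:ℝ)) (𝓝 0) := by
        have h6 := tendsto_pure_nhds V (0:ℝ)
        rwa [hV0] at h6
      have hIci : Tendsto V (𝓝[Set.Ici (0:ℝ)] 0) (𝓝 0) := by
        rw [← Set.Ioi_union_left, nhdsWithin_union, nhdsWithin_singleton]
        exact tendsto_sup.2 ⟨hmain, hpure⟩
      exact hIci.mono_left (nhdsWithin_mono _ (fun s hs => hs.1))
    · have hw := w_ge_two hm hδ hlt hx.2
      have hne : Real.log δ' - Real.log x ≠ 0 := by intro h; rw [h] at hw; norm_num at hw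
      have h1 : ContinuousAt V x := by
        have h3 : ContinuousAt (fun s : ℝ => (Real.log δ' - Real.log s)⁻¹) x :=
          ((continuousAt_const.sub (Real.continuousAt_log (ne_of_gt hlt)))).inv₀ hne
        apply h3.congr
        filter_upwards [eventually_gt_nhds hlt] with s hs
        rw [hV_def]
        simp only [not_le.2 hs, if_false]
      exact h1.continuousWithinAt
  have hVpos : ∀ x ∈ Set.Ioo (0:ℝ) (t0F m δ),
      0 ≤ (x * (Real.log δ' - Real.log x) ^ 2)⁻¹ := by
    intro x hx
    apply inv_nonneg.2
    exact mul_nonneg hx.1.le (sq_nonneg _)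
  exact intervalIntegral.integrableOn_deriv_of_nonneg hVcont hVderiv hVpos

lemma hfun_integrable (hm : 0 < m) (hδ : 0 < δ) :
    IntegrableOn (hfunF m δ) (Set.Ioc (0:ℝ) 1) := by
  rw [← Set.Ioc_union_Ioc_eq_Ioc (t0_pos hm hδ).le (t0_le_one (m := m) (δ := δ))]
  apply IntegrableOn.union
  · have hint : IntegrableOn (fun t : ℝ => 16 + 80 * Real.pi ^ 2
        * (t * (Real.log (δ / (4 * m ^ 2)) - Real.log t) ^ 2)⁻¹)
        (Set.Ioc (0:ℝ) (t0F m δ)) := by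
      apply Integrable.add
      · exact integrableOn_const measure_Ioc_lt_top.ne
      · exact (v_integrable hm hδ).const_mul _
    apply hint.congr_fun _ measurableSet_Ioc
    intro x hx
    simp only [hfunF, if_pos hx.2]
    ring
  · have hcont : ContinuousOn (fun t : ℝ => (32 + 32 * Real.pi) / t)
        (Set.Icc (t0F m δ) 1) := by
      apply ContinuousOn.div continuousOn_const continuousOn_id
      intro x hx
      exact ne_of_gt (lt_of_lt_of_le (t0_pos hm hδ) hx.1)
    apply (hcont.integrableOn_Icc.mono_set Set.Ioc_subset_Icc_self).congr_fun _ measurableSet_Ioc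
    intro x hx
    rw [hfunF, if_neg (not_le.2 hx.1)]

end StmtAux
end StmtAux

theorem stmt_18 (m δ : ℝ) (hm : 0 < m) (hδ : 0 < δ)
    (φ : ℝ → ℝ)
    (hφ : ∀ M : ℝ, φ M =
      -(16 * Real.pi ^ 2) / ((Real.log (δ * M / (4 * m ^ 2))) ^ 2 + Real.pi ^ 2)) :
    ∃ C : ℝ → ℝ → ℝ,
      (∀ t : ℝ, t ≠ 0 → ∀ P : ℝ, 0 ≤ P →
        Tendsto
          (fun R : ℝ =>
            -∫ M in Set.Icc (4 * m ^ 2) R,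
              φ M * Real.sin (t * Real.sqrt (P + M)) / Real.sqrt (P + M))
          atTop (nhds (C t P))) ∧
      (∃ K : ℝ, 0 < K ∧ ∀ t : ℝ, t ≠ 0 → ∀ P : ℝ, 0 ≤ P → |C t P| ≤ K / |t|) ∧
      (∃ h : ℝ → ℝ, IntegrableOn h (Set.Ioc (0 : ℝ) 1) ∧
        ∀ t ∈ Set.Ioc (0 : ℝ) 1, ∀ P : ℝ, 0 ≤ P → |C t P| ≤ h t) := by
  refine ⟨StmtAux.CF m δ, ?_, ⟨32 + 32 * Real.pi, by positivity, ?_⟩,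
    ⟨StmtAux.hfunF m δ, StmtAux.hfun_integrable hm hδ, ?_⟩⟩
  · intro t ht P hP
    have h := StmtAux.tendsto_CF hm hδ ht hP
    simp only [StmtAux.fF, StmtAux.phF, StmtAux.denF, StmtAux.lgF] at h
    simpa only [hφ] using h
  · intro t ht P hP
    exact StmtAux.abs_CF_le hm hδ ht hP
  · intro t htm P hP
    exact StmtAux.hfun_bound hm hδ htm hP
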